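/- The function ψ : ℝ → ℝ defined by ψ(t) = 1 − e^{−t²} is pointwise quadratically supportable at 0 on bounded sets (concretely: ψ(0) = 0, ψ′(0) = 0, and for every R > 0 there exists μ > 0 such that ψ(t) ≥ (μ/2)t² for all t with |t| ≤ R), but ψ is not convex on ℝ. -/

import Mathlib

/-- The function `ψ(t) = 1 - e^{-t²}` is pointwise quadratically supportable at `0` on bounded
sets: `ψ(0) = 0`, `ψ'(0) = 0`, and for every `R > 0` there is `μ > 0` with
`ψ(t) ≥ (μ/2) t²` whenever `|t| ≤ R`; yet `ψ` is not convex on `ℝ`. -/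
theorem pqs_not_convex_example :
    (fun t : ℝ => 1 - Real.exp (-t ^ 2)) 0 = 0 ∧
    HasDerivAt (fun t : ℝ => 1 - Real.exp (-t ^ 2)) 0 0 ∧
    (∀ R : ℝ, 0 < R → ∃ μ : ℝ, 0 < μ ∧
      ∀ t : ℝ, |t| ≤ R → μ / 2 * t ^ 2 ≤ 1 - Real.exp (-t ^ 2)) ∧
    ¬ ConvexOn ℝ Set.univ (fun t : ℝ => 1 - Real.exp (-t ^ 2)) := by
  refine ⟨by simp, ?_, ?_, ?_⟩
  · have h : HasDerivAt (fun t : ℝ => 1 - Real.exp (-t ^ 2))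
        (0 - Real.exp (-(0:ℝ) ^ 2) * (-(2 * 0 ^ 1))) 0 := by
      exact (hasDerivAt_const _ (1:ℝ)).sub
        (((hasDerivAt_pow 2 (0:ℝ)).neg).exp)
    simpa using h
  · intro R hR
    refine ⟨2 / (1 + R ^ 2), by positivity, fun t ht => ?_⟩
    have h1 : 1 + t ^ 2 ≤ Real.exp (t ^ 2) := by
      have := Real.add_one_le_exp (t ^ 2); linarith
    have hpos : (0:ℝ) < 1 + t ^ 2 := by positivity
    have h2 : Real.exp (-t ^ 2) ≤ 1 / (1 + t ^ 2) := by
      rw [Real.exp_neg]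
      exact (inv_anti₀ hpos h1).trans_eq (one_div _).symm
    have h3 : t ^ 2 ≤ R ^ 2 := by
      have := abs_nonneg t
      nlinarith [sq_abs t]
    have h4 : 2 / (1 + R ^ 2) / 2 * t ^ 2 = t ^ 2 / (1 + R ^ 2) := by ring
    rw [h4]
    have h5 : t ^ 2 / (1 + R ^ 2) ≤ t ^ 2 / (1 + t ^ 2) := by
      apply div_le_div_of_nonneg_left (by positivity) hpos (by linarith)
    have h6 : t ^ 2 / (1 + t ^ 2) = 1 - 1 / (1 + t ^ 2) := by
      field_simp
      ring
    linarith [h5, h6.le, h2]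
  · intro h
    have := h.2 (Set.mem_univ (0:ℝ)) (Set.mem_univ (4:ℝ))
      (by norm_num : (0:ℝ) ≤ 1/2) (by norm_num : (0:ℝ) ≤ 1/2) (by norm_num)
    simp only [smul_eq_mul] at this
    norm_num at this
    have he4 : Real.exp (-4 : ℝ) < 1 / 2 := by
      rw [Real.exp_neg]
      rw [inv_lt_comm₀ (Real.exp_pos 4) (by norm_num)]
      have := Real.add_one_le_exp (4:ℝ)
      linarith
    have he16 : (0:ℝ) < Real.exp (-16) := Real.exp_pos _
    nlinarith [this]
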